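/- Let R = k[x_1,…,x_n] be a polynomial ring over a field and let 𝔞 be a monomial ideal of finite colength. Then for every integer p ≥ 1, the colength satisfies ℓ(R/𝔞) ≥ (1/p^n)·ℓ(R/𝔞^p). -/

import Mathlib

open MvPolynomial

namespace StmtAux

variable {k : Type*} [Field k] {n : ℕ}

/-- The "staircase" set of a monomial generating set. -/
def upSet (S : Set (Fin n →₀ ℕ)) : Set (Fin n →₀ ℕ) := {u | ∃ s ∈ S, s ≤ u}

lemma restrictScalars_span_monomials (S : Set (Fin n →₀ ℕ)) :
    Submodule.restrictScalars k (Ideal.span ((fun u => monomial u (1 : k)) '' S))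
      = MvPolynomial.restrictSupport k (upSet S) := by
  ext f
  rw [Submodule.restrictScalars_mem, mem_ideal_span_monomial_image,
    MvPolynomial.mem_restrictSupport_iff]
  constructor
  · intro h u hu
    exact h u hu
  · intro h u hu
    exact h hu

/-- A basis of the quotient by a monomial ideal, indexed by the monomials outside it. -/
noncomputable def quotBasis (S : Set (Fin n →₀ ℕ)) :
    Module.Basis ↥(upSet S)ᶜ k
      (MvPolynomial (Fin n) k ⧸ Ideal.span ((fun u => monomial u (1 : k)) '' S)) := by
  have hc0 : IsCompl (Finsupp.supported k k (upSet S))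
      (Finsupp.supported k k (upSet S)ᶜ) := by
    constructor
    · exact Finsupp.disjoint_supported_supported disjoint_compl_right
    · rw [codisjoint_iff, ← Finsupp.supported_union, Set.union_compl_self,
        Finsupp.supported_univ]
  have hc : IsCompl (MvPolynomial.restrictSupport k (upSet S))
      (MvPolynomial.restrictSupport k (upSet S)ᶜ) := by
    have h := (Submodule.orderIsoMapComap (AddMonoidAlgebra.coeffLinearEquiv
      (M := Fin n →₀ ℕ) (S := k) k).symm).isCompl hc0
    simp only [MvPolynomial.restrictSupport, AddMonoidAlgebra.supported_eq_map]
    exact h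
  let I := Ideal.span ((fun u => monomial u (1 : k)) '' S)
  have e1 : ↥(MvPolynomial.restrictSupport k (upSet S)ᶜ) ≃ₗ[k]
      (MvPolynomial (Fin n) k ⧸ Submodule.restrictScalars k I) :=
    (Submodule.quotientEquivOfIsCompl _ _ hc).symm.trans
      (Submodule.quotEquivOfEq _ _ (restrictScalars_span_monomials S).symm)
  have e2 : (MvPolynomial (Fin n) k ⧸ Submodule.restrictScalars k I) ≃ₗ[k]
      (MvPolynomial (Fin n) k ⧸ I) :=
    Submodule.Quotient.restrictScalarsEquiv k I
  exact (MvPolynomial.basisRestrictSupport k (upSet S)ᶜ).map (e1.trans e2)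
/-- The set of `m`-fold sums of elements of `S`. -/
def sumSet : ℕ → Set (Fin n →₀ ℕ) → Set (Fin n →₀ ℕ)
  | 0, _ => {0}
  | m + 1, S => Set.image2 (· + ·) S (sumSet m S)

lemma span_monomials_pow (S : Set (Fin n →₀ ℕ)) (m : ℕ) :
    Ideal.span ((fun u => monomial u (1 : k)) '' S) ^ m
      = Ideal.span ((fun u => monomial u (1 : k)) '' sumSet m S) := by
  induction m with
  | zero =>
    rw [pow_zero, Ideal.one_eq_top]
    have : ((fun u => monomial u (1 : k)) '' sumSet 0 S) = {1} := by
      simp [sumSet]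
    rw [this, Ideal.span_singleton_one]
  | succ m ih =>
    rw [pow_succ', ih, Ideal.span_mul_span']
    congr 1
    rw [← Set.image2_mul, Set.image2_image_left, Set.image2_image_right]
    show Set.image2 (fun a b => monomial a 1 * monomial b 1) S (sumSet m S)
      = (fun u => monomial u (1 : k)) '' Set.image2 (· + ·) S (sumSet m S)
    rw [Set.image_image2]
    apply Set.image2_congr
    intro a _ b _
    rw [monomial_mul, one_mul]

lemma smul_mem_sumSet {S : Set (Fin n →₀ ℕ)} {s : Fin n →₀ ℕ} (hs : s ∈ S) (m : ℕ) :
    m • s ∈ sumSet m S := by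
  induction m with
  | zero => simp [sumSet]
  | succ m ih =>
    have : (m + 1) • s = s + m • s := by rw [add_nsmul, one_nsmul, add_comm]
    rw [this]
    exact Set.mem_image2_of_mem hs ih

lemma div_not_mem {S : Set (Fin n →₀ ℕ)} {p : ℕ} (hp : 0 < p) {u : Fin n →₀ ℕ}
    (hu : u ∉ upSet (sumSet p S)) :
    Finsupp.mapRange (· / p) (Nat.zero_div p) u ∉ upSet S := by
  rintro ⟨s, hs, hle⟩
  refine hu ⟨p • s, smul_mem_sumSet hs p, ?_⟩
  intro i
  have h1 : s i ≤ u i / p := hle i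
  calc (p • s) i = p * s i := by simp
    _ ≤ p * (u i / p) := Nat.mul_le_mul_left p h1
    _ = u i / p * p := mul_comm _ _
    _ ≤ u i := Nat.div_mul_le_self _ _

end StmtAux

/-- For a monomial ideal `𝔞` of finite colength in `k[x_1, …, x_n]`, the colength
(= `k`-vector space dimension of the quotient) satisfies
`ℓ(R/𝔞^p) ≤ p^n · ℓ(R/𝔞)` for every `p ≥ 1`. -/
theorem stmt_1 {k : Type*} [Field k] {n : ℕ}
    (a : Ideal (MvPolynomial (Fin n) k))
    (hmon : ∃ S : Set (Fin n →₀ ℕ),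
      a = Ideal.span ((fun u => MvPolynomial.monomial u (1 : k)) '' S))
    (hfin : Module.Finite k (MvPolynomial (Fin n) k ⧸ a))
    (p : ℕ) (hp : 1 ≤ p) :
    Module.finrank k (MvPolynomial (Fin n) k ⧸ (a ^ p)) ≤
      p ^ n * Module.finrank k (MvPolynomial (Fin n) k ⧸ a) := by
  classical
  obtain ⟨S, rfl⟩ := hmon
  have hp0 : 0 < p := hp
  let b := StmtAux.quotBasis (k := k) S
  have hBfin : Finite ↥(StmtAux.upSet S)ᶜ := Module.Finite.finite_basis b
  rw [StmtAux.span_monomials_pow]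
  let bp := StmtAux.quotBasis (k := k) (StmtAux.sumSet p S)
  let φ : ↥(StmtAux.upSet (StmtAux.sumSet p S))ᶜ → ↥(StmtAux.upSet S)ᶜ × (Fin n → Fin p) :=
    fun u => (⟨Finsupp.mapRange (· / p) (Nat.zero_div p) u.1,
        StmtAux.div_not_mem hp0 u.2⟩,
      fun i => ⟨u.1 i % p, Nat.mod_lt _ hp0⟩)
  have hφ : Function.Injective φ := by
    intro u v huv
    have h1 := congrArg (fun x => (x.1 : Fin n →₀ ℕ)) huv
    have h2 := congrArg Prod.snd huv
    ext1
    ext i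
    have hd : u.1 i / p = v.1 i / p := by
      simpa [φ] using congrArg (fun f : Fin n →₀ ℕ => f i) h1
    have hm : u.1 i % p = v.1 i % p := by
      simpa using congrArg (fun f : Fin n → Fin p => (f i : ℕ)) h2
    calc u.1 i = p * (u.1 i / p) + u.1 i % p := (Nat.div_add_mod _ _).symm
      _ = p * (v.1 i / p) + v.1 i % p := by rw [hd, hm]
      _ = v.1 i := Nat.div_add_mod _ _
  have hBpfin : Finite ↥(StmtAux.upSet (StmtAux.sumSet p S))ᶜ :=
    Finite.of_injective φ hφ
  rw [Module.finrank_eq_nat_card_basis bp, Module.finrank_eq_nat_card_basis b]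
  calc Nat.card ↥(StmtAux.upSet (StmtAux.sumSet p S))ᶜ
      ≤ Nat.card (↥(StmtAux.upSet S)ᶜ × (Fin n → Fin p)) :=
        Nat.card_le_card_of_injective φ hφ
    _ = Nat.card ↥(StmtAux.upSet S)ᶜ * p ^ n := by
        rw [Nat.card_prod]
        congr 1
        simp [Nat.card_eq_fintype_card]
    _ = p ^ n * Nat.card ↥(StmtAux.upSet S)ᶜ := mul_comm _ _
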